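/- Assume μ is regular, cf(λ) ≥ μ^{++}, C̄ is an S^λ_μ-club-guessing sequence (for every club E ⊆ λ there is α ∈ S^λ_μ with C_α ⊆ E), and 𝒜 ⊆ [μ]^μ is a MAD family with |𝒜| ≥ λ. Then X = X[λ, μ, 𝒜, C̄] is high: every closed unbounded F ⊆ X satisfies |{α : |F ∩ X_α| = |F|}| ≥ μ. -/

import Mathlib

open Set Ordinal Cardinal Topology

noncomputable section

namespace DSoukupPaper

/-- The set `S^λ_μ` of ordinals below `lam` of cofinality `mu`. -/
def Sset (lam : Ordinal.{0}) (mu : Cardinal.{0}) : Set Ordinal := {α | α < lam ∧ α.cof = mu}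

/-- `C` is a club in the ordinal `o`. -/
def IsClubBelow (C : Set Ordinal.{0}) (o : Ordinal.{0}) : Prop :=
  C ⊆ Set.Iio o ∧ (∀ β < o, ∃ γ ∈ C, β ≤ γ) ∧
    (∀ β < o, Order.IsSuccLimit β → (∀ γ < β, ∃ δ ∈ C, γ < δ ∧ δ < β) → β ∈ C)

/-- `A` is nonstationary in the ordinal `o`. -/
def IsNonstationaryBelow (A : Set Ordinal.{0}) (o : Ordinal.{0}) : Prop :=
  ∃ C : Set Ordinal, IsClubBelow C o ∧ ∀ x ∈ A, x ∉ C

/-- `A` is stationary in the ordinal `o`. -/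
def IsStationaryBelow (A : Set Ordinal.{0}) (o : Ordinal.{0}) : Prop :=
  ∀ C : Set Ordinal, IsClubBelow C o → ∃ x ∈ A, x ∈ C

/-- A `T₁` space is linearly D iff every nontrivial monotone open cover admits a
closed discrete big set (Guo–Junnila characterization, taken as definition). -/
def LinearlyDSpace (Y : Type*) [TopologicalSpace Y] : Prop :=
  ∀ 𝒰 : Set (Set Y), (∀ U ∈ 𝒰, IsOpen U) → ⋃₀ 𝒰 = Set.univ →
    IsChain (· ⊆ ·) 𝒰 → (∀ U ∈ 𝒰, U ≠ Set.univ) →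
    ∃ D : Set Y, IsClosed D ∧ DiscreteTopology D ∧ ∀ U ∈ 𝒰, ¬D ⊆ U

/-- The data of the construction `X[λ,μ,𝒜,C̄]`: cardinals `λ > μ = cf(μ)`,
a MAD family `𝒜 = {M^φ : φ < κ} ⊆ [μ]^μ`, and an `S^λ_μ`-club sequence
`C̄ = ⟨C_α : α ∈ S^λ_μ⟩`, given via increasing enumerations `a α : μ → C_α`. -/
structure Setup where
  lam : Cardinal.{0}
  mu : Cardinal.{0}
  kappa : Cardinal.{0}
  mu_reg : mu.IsRegular
  mu_lt_lam : mu < lam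
  /-- the MAD family: `M φ` for `φ < κ` -/
  M : Ordinal.{0} → Set Ordinal.{0}
  M_sub : ∀ φ < kappa.ord, M φ ⊆ Set.Iio mu.ord
  M_card : ∀ φ < kappa.ord, #(M φ) = Cardinal.lift.{1} mu
  M_ad : ∀ φ < kappa.ord, ∀ ψ < kappa.ord, φ ≠ ψ →
    #(↥(M φ ∩ M ψ)) < Cardinal.lift.{1} mu
  M_mad : ∀ N ⊆ Set.Iio mu.ord, #N = Cardinal.lift.{1} mu →
    ∃ φ < kappa.ord, #(↥(N ∩ M φ)) = Cardinal.lift.{1} mu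
  /-- the club sequence: `a α ξ` is the `ξ`-th element of `C_α` -/
  a : Ordinal.{0} → Ordinal.{0} → Ordinal.{0}
  a_mono : ∀ α ∈ Sset lam.ord mu, ∀ ξ < mu.ord, ∀ ζ < ξ, a α ζ < a α ξ
  a_lt : ∀ α ∈ Sset lam.ord mu, ∀ ξ < mu.ord, a α ξ < α
  a_unbounded : ∀ α ∈ Sset lam.ord mu, ∀ β < α, ∃ ξ < mu.ord, β ≤ a α ξ
  a_closed : ∀ α ∈ Sset lam.ord mu, ∀ ξ < mu.ord, Order.IsSuccLimit ξ →
    IsLUB (a α '' Set.Iio ξ) (a α ξ)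

namespace Setup

variable (P : Setup)

/-- `C_α` as a set. -/
def C (α : Ordinal) : Set Ordinal := P.a α '' Set.Iio P.mu.ord

open Classical in
/-- the interval `I^ξ_α`. -/
def I (α ξ : Ordinal) : Set Ordinal :=
  if Order.IsSuccLimit ξ then Set.Icc (P.a α ξ) (P.a α (ξ + 1)) else Set.Ioc (P.a α ξ) (P.a α (ξ + 1))

/-- the underlying set of the space: a subset of `λ × κ`. -/
def Xset : Set (Ordinal × Ordinal) :=
  {p | p.1 < P.lam.ord ∧
    ((p.1 ∈ Sset P.lam.ord P.mu ∧ p.2 < P.kappa.ord) ∨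
      (p.1 ∉ Sset P.lam.ord P.mu ∧ p.2 = 0))}

/-- the column `X_α` (as a set of pairs). -/
def col (α : Ordinal) : Set (Ordinal × Ordinal) := {p ∈ P.Xset | p.1 = α}

/-- basic neighborhood `U((α,φ),η)` for `α ∈ S^λ_μ`. -/
def U1 (α φ η : Ordinal) : Set (Ordinal × Ordinal) :=
  {(α, φ)} ∪ ⋃ γ ∈ (⋃ ξ ∈ {ξ | ξ ∈ P.M φ ∧ η ≤ ξ}, P.I α ξ), P.col γ

/-- basic neighborhood `U(α,β) = ⋃{X_γ : β < γ ≤ α}`. -/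
def U3 (α β : Ordinal) : Set (Ordinal × Ordinal) := ⋃ γ ∈ Set.Ioc β α, P.col γ

/-- the collection of basic open sets. -/
def basics : Set (Set (Ordinal × Ordinal)) :=
  {B | (∃ α ∈ Sset P.lam.ord P.mu, ∃ φ < P.kappa.ord, ∃ η < P.mu.ord, B = P.U1 α φ η) ∨
    (∃ α < P.lam.ord, α.cof < P.mu ∧ B = {(α, 0)}) ∨
    (∃ α < P.lam.ord, P.mu < α.cof ∧ ∃ β < α, B = P.U3 α β)}

/-- the topology of `X[λ,μ,𝒜,C̄]`, generated by the basic open sets. -/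
instance instTopo : TopologicalSpace ↥P.Xset :=
  TopologicalSpace.generateFrom {V | ∃ B ∈ P.basics, V = Subtype.val ⁻¹' B}

/-- the column `X_α` viewed inside the space. -/
def colS (α : Ordinal) : Set ↥P.Xset := {x | (x : Ordinal × Ordinal).1 = α}

/-- the projection `π(F) = {α < λ : F ∩ X_α ≠ ∅}`. -/
def pi (F : Set ↥P.Xset) : Set Ordinal := {α | ∃ x ∈ F, (x : Ordinal × Ordinal).1 = α}

/-- `F` is unbounded iff `π(F)` is unbounded in `λ`. -/
def Unbounded (F : Set ↥P.Xset) : Prop := ∀ β < P.lam.ord, ∃ γ ∈ P.pi F, β < γ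

/-- `F` is high enough iff `|{α < λ : |F_α| = |F|}| ≥ μ`. -/
def HighEnough (F : Set ↥P.Xset) : Prop :=
  Cardinal.lift.{1} P.mu ≤ #({α | #(↥(F ∩ P.colS α)) = #F} : Set Ordinal)

end Setup
end DSoukupPaper

namespace DSoukupPaper

namespace Setup

variable (P : Setup)

lemma aleph0_le_mu : ℵ₀ ≤ P.mu := P.mu_reg.aleph0_le

lemma muord_limit : Order.IsSuccLimit P.mu.ord := Cardinal.isSuccLimit_ord P.aleph0_le_mu

lemma muord_pos : 0 < P.mu.ord := pos_iff_ne_zero.2 P.muord_limit.ne_bot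

lemma succ_lt_muord {ξ : Ordinal} (h : ξ < P.mu.ord) : ξ + 1 < P.mu.ord := by
  rw [Ordinal.add_one_eq_succ]; exact P.muord_limit.succ_lt h

lemma a_le {α : Ordinal} (hα : α ∈ Sset P.lam.ord P.mu) {ζ ξ : Ordinal}
    (hζξ : ζ ≤ ξ) (hξ : ξ < P.mu.ord) : P.a α ζ ≤ P.a α ξ := by
  rcases eq_or_lt_of_le hζξ with rfl | h
  · exact le_rfl
  · exact (P.a_mono α hα ξ hξ ζ h).le

lemma M_unbounded {φ η : Ordinal} (hφ : φ < P.kappa.ord) (hη : η < P.mu.ord) :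
    ∃ ξ ∈ P.M φ, η ≤ ξ := by
  by_contra h
  push_neg at h
  have h1 : #(P.M φ) ≤ #(Set.Iio η) :=
    Cardinal.mk_le_mk_of_subset fun ξ hξ => (h ξ hξ)
  rw [P.M_card φ hφ, Ordinal.mk_Iio_ordinal] at h1
  exact absurd (Cardinal.lift_le.mp h1) (not_le.mpr (Cardinal.lt_ord.mp hη))

/-- The set of limits of `π(F)` below `λ`. -/
def Eset (F : Set ↥P.Xset) : Set Ordinal :=
  {γ | γ < P.lam.ord ∧ ∀ β < γ, ∃ δ ∈ P.pi F, β < δ ∧ δ < γ}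

lemma pi_lt {F : Set ↥P.Xset} {δ : Ordinal} (h : δ ∈ P.pi F) : δ < P.lam.ord := by
  obtain ⟨x, -, rfl⟩ := h
  exact x.2.1

lemma Eset_club {F : Set ↥P.Xset} (hub : P.Unbounded F)
    (hcof : ℵ₀ < P.lam.ord.cof) : IsClubBelow (P.Eset F) P.lam.ord := by
  refine ⟨fun γ hγ => hγ.1, ?_, ?_⟩
  · intro β hβ
    have step : ∀ x : Ordinal, x < P.lam.ord →
        ∃ y, y ∈ P.pi F ∧ x < y ∧ y < P.lam.ord := by
      intro x hx
      obtain ⟨y, hy, hxy⟩ := hub x hx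
      exact ⟨y, hy, hxy, P.pi_lt hy⟩
    choose g hg1 hg2 hg3 using step
    let f : ℕ → {x : Ordinal // x < P.lam.ord} := fun n =>
      Nat.rec ⟨β, hβ⟩ (fun _ p => ⟨g p.1 p.2, hg3 p.1 p.2⟩) n
    have hmem : ∀ n, (f (n + 1)).1 ∈ P.pi F := fun n => hg1 _ _
    have hmono : ∀ n, (f n).1 < (f (n + 1)).1 := fun n => hg2 _ _
    have hle : ∀ n, (f n).1 ≤ ⨆ m, (f m).1 := fun n =>
      Ordinal.le_iSup (fun m => (f m).1) n
    have hγlt : (⨆ m, (f m).1) < P.lam.ord := by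
      apply Ordinal.iSup_lt_ord _ (fun n => (f n).2)
      rw [Cardinal.mk_nat]
      exact hcof
    refine ⟨⨆ m, (f m).1, ⟨hγlt, ?_⟩, hle 0⟩
    intro β' hβ'
    have hex : ∃ n, β' < (f n).1 := by
      by_contra h
      push_neg at h
      exact absurd (ciSup_le fun n => h n) (not_le.mpr hβ')
    obtain ⟨n, hn⟩ := hex
    exact ⟨(f (n + 1)).1, hmem n, lt_trans hn (hmono n),
      lt_of_lt_of_le (hmono (n + 1)) (hle (n + 2))⟩
  · intro β hβ hlim happ
    refine ⟨hβ, fun γ hγ => ?_⟩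
    obtain ⟨δ, hδE, hγδ, hδβ⟩ := happ γ hγ
    obtain ⟨δ', hδ', h1, h2⟩ := hδE.2 γ hγδ
    exact ⟨δ', hδ', h1, lt_trans h2 hδβ⟩

lemma Ioo_subset_I {α ξ : Ordinal} :
    Set.Ioo (P.a α ξ) (P.a α (ξ + 1)) ⊆ P.I α ξ := by
  intro δ hδ
  unfold I
  split_ifs
  · exact ⟨hδ.1.le, hδ.2.le⟩
  · exact ⟨hδ.1, hδ.2.le⟩

lemma I_bounds {α ξ γ : Ordinal} (h : γ ∈ P.I α ξ) :
    P.a α ξ ≤ γ ∧ γ ≤ P.a α (ξ + 1) := by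
  unfold I at h
  split_ifs at h
  · exact ⟨h.1, h.2⟩
  · exact ⟨h.1.le, h.2⟩

lemma exists_mem_U1 {F : Set ↥P.Xset} {α φ η : Ordinal}
    (hα : α ∈ Sset P.lam.ord P.mu) (hφ : φ < P.kappa.ord) (hη : η < P.mu.ord)
    (hC : ∀ ζ < P.mu.ord, P.a α ζ ∈ P.Eset F) :
    ∃ y ∈ F, (y : Ordinal × Ordinal) ∈ P.U1 α φ η := by
  obtain ⟨ξ, hξM, hηξ⟩ := P.M_unbounded hφ hη
  have hξ : ξ < P.mu.ord := P.M_sub φ hφ hξM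
  have hξ1 : ξ + 1 < P.mu.ord := P.succ_lt_muord hξ
  have hlt : P.a α ξ < P.a α (ξ + 1) :=
    P.a_mono α hα (ξ + 1) hξ1 ξ (by rw [Ordinal.add_one_eq_succ]; exact Order.lt_succ ξ)
  obtain ⟨δ, hδπ, h1, h2⟩ := (hC (ξ + 1) hξ1).2 (P.a α ξ) hlt
  obtain ⟨y, hyF, hy1⟩ := hδπ
  refine ⟨y, hyF, Set.mem_union_right _ ?_⟩
  rw [Set.mem_iUnion₂]
  refine ⟨δ, ?_, ⟨y.2, hy1⟩⟩
  rw [Set.mem_iUnion₂]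
  exact ⟨ξ, ⟨hξM, hηξ⟩, P.Ioo_subset_I ⟨h1, h2⟩⟩

lemma U1_anti {α φ η η' : Ordinal} (h : η ≤ η') : P.U1 α φ η' ⊆ P.U1 α φ η := by
  apply Set.union_subset_union_right
  apply Set.biUnion_subset_biUnion_left
  apply Set.biUnion_subset_biUnion_left
  intro ξ hξ
  exact ⟨hξ.1, h.trans hξ.2⟩

lemma a_ne_of_limit {α α' ξ' : Ordinal} (hα : α ∈ Sset P.lam.ord P.mu)
    (hα' : α' ∈ Sset P.lam.ord P.mu) (hξ' : ξ' < P.mu.ord) (hlim : Order.IsSuccLimit ξ') :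
    P.a α' ξ' ≠ α := by
  intro h
  have hLUB := P.a_closed α' hα' ξ' hξ' hlim
  rw [h] at hLUB
  have hub2 : ∀ ζ, ζ < ξ' → P.a α' ζ < α := by
    intro ζ hζ
    rw [← h]
    exact P.a_mono α' hα' ξ' hξ' ζ hζ
  have hbsup : Ordinal.bsup ξ' (fun ζ _ => P.a α' ζ) = α := by
    apply le_antisymm
    · exact Ordinal.bsup_le fun ζ hζ => (hub2 ζ hζ).le
    · refine hLUB.2 ?_
      rintro b ⟨ζ, hζ, rfl⟩
      exact Ordinal.le_bsup _ ζ hζ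
  have hcle : α.cof ≤ ξ'.card := by
    have h2 := Ordinal.cof_bsup_le (o := ξ') (f := fun ζ _ => P.a α' ζ)
      (fun ζ hζ => by rw [hbsup]; exact hub2 ζ hζ)
    rwa [hbsup] at h2
  rw [hα.2] at hcle
  exact absurd hcle (not_le.mpr (Cardinal.lt_ord.mp hξ'))

lemma window_sub {α φ β : Ordinal} {B : Set (Ordinal × Ordinal)}
    (hα : α ∈ Sset P.lam.ord P.mu) (hφ : φ < P.kappa.ord) (hβ : β < α)
    (hwin : ∀ δ, β < δ → δ < α → P.col δ ⊆ B) (hxB : (α, φ) ∈ B) :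
    ∃ η < P.mu.ord, P.U1 α φ η ⊆ B := by
  obtain ⟨ξ₀, hξ₀, hβle⟩ := P.a_unbounded α hα β hβ
  have hη : ξ₀ + 1 < P.mu.ord := P.succ_lt_muord hξ₀
  refine ⟨ξ₀ + 1, hη, ?_⟩
  rintro z (hz | hz)
  · rw [Set.mem_singleton_iff] at hz
    subst hz
    exact hxB
  · rw [Set.mem_iUnion₂] at hz
    obtain ⟨γ, hγ, hzcol⟩ := hz
    rw [Set.mem_iUnion₂] at hγ
    obtain ⟨ξ, ⟨hξM, hηξ⟩, hγI⟩ := hγ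
    have hξμ : ξ < P.mu.ord := P.M_sub φ hφ hξM
    have hξ1 : ξ + 1 < P.mu.ord := P.succ_lt_muord hξμ
    obtain ⟨hI1, hI2⟩ := P.I_bounds hγI
    have hβγ : β < γ := by
      calc β ≤ P.a α ξ₀ := hβle
        _ < P.a α (ξ₀ + 1) := P.a_mono α hα (ξ₀ + 1) hη ξ₀
            (by rw [Ordinal.add_one_eq_succ]; exact Order.lt_succ ξ₀)
        _ ≤ P.a α ξ := P.a_le hα hηξ hξμ
        _ ≤ γ := hI1
    have hγα : γ < α := lt_of_le_of_lt hI2 (P.a_lt α hα (ξ + 1) hξ1)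
    exact hwin γ hβγ hγα hzcol

lemma basic_nbhd {α φ : Ordinal} {B : Set (Ordinal × Ordinal)}
    (hα : α ∈ Sset P.lam.ord P.mu) (hφ : φ < P.kappa.ord)
    (hB : B ∈ P.basics) (hxB : (α, φ) ∈ B) :
    ∃ η < P.mu.ord, P.U1 α φ η ⊆ B := by
  rcases hB with ⟨α', hα', φ'', hφ'', η'', hη'', rfl⟩ |
    ⟨α', hα', hcof, rfl⟩ | ⟨α'', hα'', hcof, β'', hβ'', rfl⟩
  · rcases hxB with hz | hz
    · rw [Set.mem_singleton_iff, Prod.mk.injEq] at hz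
      obtain ⟨rfl, rfl⟩ := hz
      exact ⟨η'', hη'', subset_rfl⟩
    · rw [Set.mem_iUnion₂] at hz
      obtain ⟨γ, hγ, hcol⟩ := hz
      rw [Set.mem_iUnion₂] at hγ
      obtain ⟨ξ', ⟨hξM, hηξ⟩, hγI⟩ := hγ
      obtain rfl : α = γ := hcol.2
      have hξ'μ : ξ' < P.mu.ord := P.M_sub φ'' hφ'' hξM
      obtain ⟨hI1, hI2⟩ := P.I_bounds hγI
      have hlow : P.a α' ξ' < α := by
        rcases lt_or_eq_of_le hI1 with h | h
        · exact h
        · by_cases hL : Order.IsSuccLimit ξ'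
          · exact absurd h (P.a_ne_of_limit hα hα' hξ'μ hL)
          · unfold I at hγI
            rw [if_neg hL] at hγI
            exact hγI.1
      refine P.window_sub hα hφ hlow ?_ (Set.mem_union_right _ ?_)
      · intro δ hβδ hδα
        intro z hzcol
        refine Set.mem_union_right _ ?_
        rw [Set.mem_iUnion₂]
        refine ⟨δ, ?_, hzcol⟩
        rw [Set.mem_iUnion₂]
        exact ⟨ξ', ⟨hξM, hηξ⟩, P.Ioo_subset_I ⟨hβδ, lt_of_lt_of_le hδα hI2⟩⟩
      · rw [Set.mem_iUnion₂]
        refine ⟨α, ?_, ⟨⟨hα.1, Or.inl ⟨hα, hφ⟩⟩, rfl⟩⟩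
        rw [Set.mem_iUnion₂]
        exact ⟨ξ', ⟨hξM, hηξ⟩, hγI⟩
  · exfalso
    rw [Set.mem_singleton_iff, Prod.mk.injEq] at hxB
    obtain ⟨h1, -⟩ := hxB
    rw [← h1, hα.2] at hcof
    exact lt_irrefl _ hcof
  · rw [Setup.U3, Set.mem_iUnion₂] at hxB
    obtain ⟨γ, hγIoc, hcol⟩ := hxB
    obtain rfl : α = γ := hcol.2
    refine P.window_sub hα hφ hγIoc.1 ?_ ?_
    · intro δ hβδ hδα z hz
      rw [Setup.U3, Set.mem_iUnion₂]
      exact ⟨δ, ⟨hβδ, le_of_lt (lt_of_lt_of_le hδα hγIoc.2)⟩, hz⟩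
    · rw [Setup.U3, Set.mem_iUnion₂]
      exact ⟨α, hγIoc, hcol⟩

lemma col_filled {F : Set ↥P.Xset} (hF : IsClosed F) {α : Ordinal}
    (hα : α ∈ Sset P.lam.ord P.mu) (hC : ∀ ζ < P.mu.ord, P.a α ζ ∈ P.Eset F) :
    P.colS α ⊆ F := by
  intro x hxcol
  have hxval : (x : Ordinal × Ordinal) = (α, (x : Ordinal × Ordinal).2) :=
    Prod.ext hxcol rfl
  have hφκ : (x : Ordinal × Ordinal).2 < P.kappa.ord := by
    rcases x.2.2 with h | h
    · exact h.2
    · exact absurd (by rw [hxcol]; exact hα) h.1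
  set φ := (x : Ordinal × Ordinal).2
  have hkey : ∀ O : Set ↥P.Xset, TopologicalSpace.GenerateOpen
      {V | ∃ B ∈ P.basics, V = Subtype.val ⁻¹' B} O → x ∈ O →
      ∃ η < P.mu.ord, (Subtype.val ⁻¹' P.U1 α φ η : Set ↥P.Xset) ⊆ O := by
    intro O hO
    induction hO with
    | basic s hs =>
      intro hx
      obtain ⟨B, hB, rfl⟩ := hs
      have hxB : (α, φ) ∈ B := by rw [← hxval]; exact hx
      obtain ⟨η, hη, hsub⟩ := P.basic_nbhd hα hφκ hB hxB
      exact ⟨η, hη, fun z hz => hsub hz⟩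
    | univ => exact fun _ => ⟨0, P.muord_pos, Set.subset_univ _⟩
    | inter O₁ O₂ h₁ h₂ ih₁ ih₂ =>
      intro hx
      obtain ⟨η₁, hη₁, hs₁⟩ := ih₁ hx.1
      obtain ⟨η₂, hη₂, hs₂⟩ := ih₂ hx.2
      refine ⟨max η₁ η₂, max_lt hη₁ hη₂, fun z hz => ⟨hs₁ ?_, hs₂ ?_⟩⟩
      · exact P.U1_anti (le_max_left η₁ η₂) hz
      · exact P.U1_anti (le_max_right η₁ η₂) hz
    | sUnion S hS ih =>
      intro hx
      obtain ⟨O, hOS, hxO⟩ := hx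
      obtain ⟨η, hη, hsub⟩ := ih O hOS hxO
      exact ⟨η, hη, hsub.trans (Set.subset_sUnion_of_mem hOS)⟩
  have hxcl : x ∈ closure F := by
    rw [mem_closure_iff]
    intro O hO hxO
    obtain ⟨η, hη, hsub⟩ := hkey O hO hxO
    obtain ⟨y, hyF, hyU⟩ := P.exists_mem_U1 hα hφκ hη hC
    exact ⟨y, hsub hyU, hyF⟩
  rwa [hF.closure_eq] at hxcl

lemma mk_colS {α : Ordinal} (hα : α ∈ Sset P.lam.ord P.mu) :
    #(P.colS α) = Cardinal.lift.{1} P.kappa := by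
  apply le_antisymm
  · have hmem : ∀ x : ↥(P.colS α),
        ((x : ↥P.Xset) : Ordinal × Ordinal).2 < P.kappa.ord := by
      intro x
      rcases (x : ↥P.Xset).2.2 with h | h
      · exact h.2
      · exact absurd (by rw [x.2]; exact hα) h.1
    have inj : Function.Injective (fun x : ↥(P.colS α) =>
        (⟨((x : ↥P.Xset) : Ordinal × Ordinal).2, hmem x⟩ :
          ↥(Set.Iio P.kappa.ord))) := by
      intro x y h
      simp only [Subtype.mk.injEq] at h
      apply Subtype.ext
      apply Subtype.ext
      exact Prod.ext (x.2.trans y.2.symm) (congrArg Subtype.val h)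
    have h1 := Cardinal.mk_le_of_injective inj
    rwa [Ordinal.mk_Iio_ordinal, Cardinal.card_ord] at h1
  · have inj : Function.Injective (fun φ' : ↥(Set.Iio P.kappa.ord) =>
        (⟨⟨(α, φ'.1), ⟨hα.1, Or.inl ⟨hα, φ'.2⟩⟩⟩, rfl⟩ : ↥(P.colS α))) := by
      intro x y h
      simp only [Subtype.mk.injEq, Prod.mk.injEq] at h
      exact Subtype.ext (congrArg (fun z : ↥(P.colS α) => ((z : ↥P.Xset) : Ordinal × Ordinal).2) h)
    have h1 := Cardinal.mk_le_of_injective inj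
    rwa [Ordinal.mk_Iio_ordinal, Cardinal.card_ord] at h1

lemma aleph0_le_kappa (hkappa : P.lam ≤ P.kappa) : ℵ₀ ≤ P.kappa :=
  P.aleph0_le_mu.trans (P.mu_lt_lam.le.trans hkappa)

lemma mk_Xset_le (hkappa : P.lam ≤ P.kappa) :
    #(↥P.Xset) ≤ Cardinal.lift.{1} P.kappa := by
  have hκpos : 0 < P.kappa.ord := by
    rw [← Cardinal.ord_zero]
    exact Cardinal.ord_lt_ord.mpr
      (lt_of_lt_of_le Cardinal.aleph0_pos (P.aleph0_le_kappa hkappa))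
  have hmem2 : ∀ x : ↥P.Xset, (x : Ordinal × Ordinal).2 < P.kappa.ord := by
    intro x
    rcases x.2.2 with h | h
    · exact h.2
    · rw [h.2]; exact hκpos
  have inj : Function.Injective (fun x : ↥P.Xset =>
      ((⟨(x : Ordinal × Ordinal).1, x.2.1⟩, ⟨(x : Ordinal × Ordinal).2, hmem2 x⟩) :
        ↥(Set.Iio P.lam.ord) × ↥(Set.Iio P.kappa.ord))) := by
    intro x y h
    simp only [Prod.mk.injEq, Subtype.mk.injEq] at h
    exact Subtype.ext (Prod.ext (congrArg Subtype.val h.1) (congrArg Subtype.val h.2))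
  have h1 := Cardinal.mk_le_of_injective inj
  rw [Cardinal.mk_prod, Ordinal.mk_Iio_ordinal, Ordinal.mk_Iio_ordinal,
    Cardinal.card_ord, Cardinal.card_ord, Cardinal.lift_id, Cardinal.lift_id,
    ← Cardinal.lift_mul] at h1
  have hmul : P.lam * P.kappa = P.kappa :=
    Cardinal.mul_eq_right (P.aleph0_le_kappa hkappa) hkappa
      (ne_of_gt (lt_of_lt_of_le Cardinal.aleph0_pos
        (P.aleph0_le_mu.trans P.mu_lt_lam.le)))
  rwa [hmul] at h1

lemma mu_le_cof (hcof : Order.succ (Order.succ P.mu) ≤ P.lam.ord.cof) :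
    P.mu ≤ P.lam.ord.cof :=
  le_trans (le_trans (Order.le_succ _) (Order.le_succ _)) hcof

lemma aleph0_lt_cof (hcof : Order.succ (Order.succ P.mu) ≤ P.lam.ord.cof) :
    ℵ₀ < P.lam.ord.cof :=
  lt_of_le_of_lt P.aleph0_le_mu
    (lt_of_lt_of_le ((Order.lt_succ P.mu).trans (Order.lt_succ _)) hcof)

end Setup

end DSoukupPaper

namespace DSoukupPaper

/-- If `μ` is regular, `cf(λ) ≥ μ⁺⁺`, `C̄` is an `S^λ_μ`-club-guessing sequence and
`|𝒜| ≥ λ`, then `X[λ,μ,𝒜,C̄]` is high. -/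
theorem stmt16 (P : Setup) (hcof : Order.succ (Order.succ P.mu) ≤ P.lam.ord.cof)
    (hguess : ∀ E : Set Ordinal, IsClubBelow E P.lam.ord →
      ∃ α ∈ Sset P.lam.ord P.mu, P.C α ⊆ E)
    (hkappa : P.lam ≤ P.kappa)
    (F : Set ↥P.Xset) (hF : IsClosed F) (hub : P.Unbounded F) :
    P.HighEnough F := by
  classical
  have hlamℵ : ℵ₀ ≤ P.lam := P.aleph0_le_mu.trans P.mu_lt_lam.le
  have hFle : #(↥F) ≤ Cardinal.lift.{1} P.kappa :=
    (Cardinal.mk_set_le F).trans (P.mk_Xset_le hkappa)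
  set T : Set Ordinal := {α | #(↥(F ∩ P.colS α)) = #(↥F)} with hTdef
  have hfill : ∀ α ∈ Sset P.lam.ord P.mu,
      (∀ ζ < P.mu.ord, P.a α ζ ∈ P.Eset F) → α ∈ T := by
    intro α hα hC
    have hsub := P.col_filled hF hα hC
    have h1 : F ∩ P.colS α = P.colS α := Set.inter_eq_self_of_subset_right hsub
    have h2 : #(↥F) = Cardinal.lift.{1} P.kappa := by
      refine le_antisymm hFle ?_
      rw [← P.mk_colS hα]
      exact Cardinal.mk_le_mk_of_subset hsub
    show #(↥(F ∩ P.colS α)) = #(↥F)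
    rw [h1, h2, P.mk_colS hα]
  have hEclub := P.Eset_club hub (P.aleph0_lt_cof hcof)
  have hGunb : ∀ β < P.lam.ord, ∃ γ ∈ T ∩ Set.Iio P.lam.ord, β < γ := by
    intro β hβ
    have hββ1 : β < β + 1 := by
      rw [Ordinal.add_one_eq_succ]; exact Order.lt_succ β
    have hβ1 : β + 1 < P.lam.ord := by
      rw [Ordinal.add_one_eq_succ]
      exact (Cardinal.isSuccLimit_ord hlamℵ).succ_lt hβ
    set E' : Set Ordinal := {γ ∈ P.Eset F | β < γ} with hE'def
    have hclub' : IsClubBelow E' P.lam.ord := by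
      refine ⟨fun γ hγ => hγ.1.1, ?_, ?_⟩
      · intro b hb
        obtain ⟨γ, hγE, hγge⟩ := hEclub.2.1 (max (β + 1) b) (max_lt hβ1 hb)
        refine ⟨γ, ⟨hγE, ?_⟩, le_trans (le_max_right _ _) hγge⟩
        exact lt_of_lt_of_le hββ1 (le_trans (le_max_left _ _) hγge)
      · intro b hb hlim happ
        have hbE : b ∈ P.Eset F := hEclub.2.2 b hb hlim (fun γ hγ =>
          let ⟨δ, hδ, h1, h2⟩ := happ γ hγ; ⟨δ, hδ.1, h1, h2⟩)
        obtain ⟨δ, hδ, -, h2⟩ := happ 0 (pos_iff_ne_zero.2 hlim.ne_bot)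
        exact ⟨hbE, lt_trans hδ.2 h2⟩
    obtain ⟨α, hαS, hCsub⟩ := hguess E' hclub'
    have hCE : ∀ ζ < P.mu.ord, P.a α ζ ∈ P.Eset F := by
      intro ζ hζ
      exact (hCsub ⟨ζ, hζ, rfl⟩).1
    have hβα : β < α := by
      have h0 := hCsub ⟨0, P.muord_pos, rfl⟩
      exact lt_trans h0.2 (P.a_lt α hαS 0 P.muord_pos)
    exact ⟨α, ⟨hfill α hαS hCE, hαS.1⟩, hβα⟩
  show Cardinal.lift.{1} P.mu ≤ #(↥T)
  by_contra hcon
  push_neg at hcon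
  have hGle : #(↥(T ∩ Set.Iio P.lam.ord)) < Cardinal.lift.{1} P.mu :=
    lt_of_le_of_lt (Cardinal.mk_le_mk_of_subset Set.inter_subset_left) hcon
  have hι : Cardinal.lift.{0} #(↥(T ∩ Set.Iio P.lam.ord)) <
      (Ordinal.lift.{1} P.lam.ord).cof := by
    rw [Cardinal.lift_uzero, ← Ordinal.lift_cof]
    exact lt_of_lt_of_le hGle (Cardinal.lift_le.mpr (P.mu_le_cof hcof))
  have hflt : ∀ t : ↥(T ∩ Set.Iio P.lam.ord),
      (fun t : ↥(T ∩ Set.Iio P.lam.ord) => Ordinal.lift.{1} t.1) t <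
        Ordinal.lift.{1} P.lam.ord := fun t => Ordinal.lift_lt.mpr t.2.2
  have hsup := Ordinal.iSup_lt_ord_lift hι hflt
  obtain ⟨β, hβ, hβeq⟩ := Ordinal.lt_lift_iff.mp hsup
  obtain ⟨α, hαG, hβα⟩ := hGunb β hβ
  have hle : Ordinal.lift.{1} α ≤
      ⨆ t : ↥(T ∩ Set.Iio P.lam.ord), Ordinal.lift.{1} t.1 :=
    Ordinal.le_iSup (fun t : ↥(T ∩ Set.Iio P.lam.ord) => Ordinal.lift.{1} t.1)
      ⟨α, hαG⟩
  rw [← hβeq] at hle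
  exact absurd (Ordinal.lift_le.mp hle) (not_le.mpr hβα)
end DSoukupPaper
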